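/- Let Φ be a Young function. For every measurable function f on ℝⁿ, the weak Orlicz quasi-norm ‖f‖_{wL^Φ} = inf{λ>0 : sup_{t>0} Φ(t)·m(f/λ,t) ≤ 1} equals the quasi-norm ‖f‖_{L^{Φ,∞}} = sup_{t>0} Φ⁻¹(1/m(f,t))^{-1}·t, i.e. ‖f‖_{wL^Φ} = sup_{t>0} t·Φ⁻¹(1/m(f,t))^{-1} (with the conventions 1/0 = ∞, Φ⁻¹(∞) = ∞). -/

import Mathlib

open MeasureTheory ENNReal NNReal

noncomputable section

/-- A Young function `Φ : [0,∞] → [0,∞]`: increasing, convex, `Φ(0)=0`, `Φ(∞)=∞`,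
`lim_{t→0}Φ(t)=0`, with `a(Φ)<∞` and `b(Φ)>0`. -/
structure YoungFunction (Φ : ℝ≥0∞ → ℝ≥0∞) : Prop where
  mono : Monotone Φ
  map_zero : Φ 0 = 0
  map_top : Φ ⊤ = ⊤
  convex : ∀ (a b : ℝ≥0) (x y : ℝ≥0∞), a + b = 1 →
    Φ ((a : ℝ≥0∞) * x + (b : ℝ≥0∞) * y) ≤ (a : ℝ≥0∞) * Φ x + (b : ℝ≥0∞) * Φ y
  tendsto_zero : Filter.Tendsto Φ (nhdsWithin 0 (Set.Ioi 0)) (nhds 0)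
  exists_pos : ∃ t : ℝ≥0∞, t ≠ ⊤ ∧ 0 < Φ t
  exists_finite : ∃ t : ℝ≥0∞, 0 < t ∧ Φ t < ⊤

/-- The generalized inverse `Φ⁻¹(u) = inf{t ≥ 0 : Φ(t) > u}` (with `inf ∅ = ∞`,
so `Φ⁻¹(∞) = ∞`). -/
def yinv (Φ : ℝ≥0∞ → ℝ≥0∞) (u : ℝ≥0∞) : ℝ≥0∞ := sInf {t | u < Φ t}


/-- the weak Orlicz quasi-norm coincides with the Orlicz-Lorentz
`L^{Φ,∞}` quasi-norm `sup_{t>0} t Φ⁻¹(1/m(f,t))⁻¹`. -/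
theorem stmt7 (Φ : ℝ≥0∞ → ℝ≥0∞) (hΦ : YoungFunction Φ) (n : ℕ)
    (f : EuclideanSpace ℝ (Fin n) → ℝ) (hf : Measurable f) :
    sInf {l : ℝ≥0∞ | 0 < l ∧ ∀ t : ℝ≥0, 0 < t →
        Φ (t : ℝ≥0∞) * volume {x | l * (t : ℝ≥0∞) < ENNReal.ofReal |f x|} ≤ 1}
      = ⨆ (t : ℝ≥0) (_ : 0 < t),
          (t : ℝ≥0∞) *
            (yinv Φ (volume {x | (t : ℝ≥0∞) < ENNReal.ofReal |f x|})⁻¹)⁻¹ := by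
  have hanti : ∀ a b : ℝ≥0∞, a ≤ b →
      volume {x : EuclideanSpace ℝ (Fin n) | b < ENNReal.ofReal |f x|}
        ≤ volume {x | a < ENNReal.ofReal |f x|} :=
    fun a b hab => measure_mono (fun x hx => lt_of_le_of_lt hab hx)
  have hinvmul : ∀ v : ℝ≥0∞, v⁻¹ * v ≤ 1 := by
    intro v
    rcases eq_or_ne v 0 with rfl | h0
    · simp
    rcases eq_or_ne v ∞ with rfl | ht
    · simp
    · rw [ENNReal.inv_mul_cancel h0 ht]
  refine le_antisymm ?_ ?_
  · -- sInf ≤ sup : every l strictly above the sup belongs to the set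
    refine le_of_forall_gt_imp_ge_of_dense (fun l hl => sInf_le ?_)
    refine ⟨lt_of_le_of_lt zero_le hl, ?_⟩
    intro t ht
    have ht0 : (t : ℝ≥0∞) ≠ 0 := by exact_mod_cast ht.ne'
    rcases eq_or_ne l ∞ with rfl | hltop
    · have hempty : {x : EuclideanSpace ℝ (Fin n) |
          (⊤ : ℝ≥0∞) * (t : ℝ≥0∞) < ENNReal.ofReal |f x|} = ∅ := by
        ext x
        simp [ENNReal.top_mul ht0]
      rw [hempty]
      simp
    · -- l finite: use the sup bound at s = l * t
      set v : ℝ≥0∞ := volume {x : EuclideanSpace ℝ (Fin n)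
        | l * (t : ℝ≥0∞) < ENNReal.ofReal |f x|} with hv
      set y : ℝ≥0∞ := yinv Φ v⁻¹ with hy
      have hl0 : l ≠ 0 := (lt_of_le_of_lt zero_le hl).ne'
      have hs0 : l * (t : ℝ≥0∞) ≠ 0 := mul_ne_zero hl0 ht0
      have hstop : l * (t : ℝ≥0∞) ≠ ∞ := ENNReal.mul_ne_top hltop (ENNReal.coe_ne_top)
      set sN : ℝ≥0 := (l * (t : ℝ≥0∞)).toNNReal with hsN
      have hsNc : (sN : ℝ≥0∞) = l * (t : ℝ≥0∞) := ENNReal.coe_toNNReal hstop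
      have hsNpos : 0 < sN := by
        rw [← ENNReal.coe_pos] at *
        rw [hsNc]
        exact pos_iff_ne_zero.mpr hs0
      have hterm : (sN : ℝ≥0∞) *
          (yinv Φ (volume {x : EuclideanSpace ℝ (Fin n)
            | (sN : ℝ≥0∞) < ENNReal.ofReal |f x|})⁻¹)⁻¹
          ≤ ⨆ (t : ℝ≥0) (_ : 0 < t), (t : ℝ≥0∞) *
            (yinv Φ (volume {x | (t : ℝ≥0∞) < ENNReal.ofReal |f x|})⁻¹)⁻¹ :=
        le_iSup₂ (f := fun (t : ℝ≥0) (_ : 0 < t) => (t : ℝ≥0∞) *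
          (yinv Φ (volume {x | (t : ℝ≥0∞) < ENNReal.ofReal |f x|})⁻¹)⁻¹) sN hsNpos
      rw [hsNc] at hterm
      have h1 : l * (t : ℝ≥0∞) * y⁻¹ < l := lt_of_le_of_lt hterm hl
      have h2 : l * (t : ℝ≥0∞) * y⁻¹ < l * (t : ℝ≥0∞) * (t : ℝ≥0∞)⁻¹ := by
        have : l * (t : ℝ≥0∞) * (t : ℝ≥0∞)⁻¹ = l := by
          rw [mul_assoc, ENNReal.mul_inv_cancel ht0 ENNReal.coe_ne_top, mul_one]
        rw [this]; exact h1
      have h3 : y⁻¹ < (t : ℝ≥0∞)⁻¹ := (ENNReal.mul_right_strictMono hs0 hstop).lt_iff_lt.mp h2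
      have h4 : (t : ℝ≥0∞) < y := ENNReal.inv_lt_inv.mp h3
      have h5 : ¬ (v⁻¹ < Φ (t : ℝ≥0∞)) := by
        intro hmem
        exact absurd (sInf_le hmem : y ≤ (t : ℝ≥0∞)) (not_le.mpr h4)
      have h6 : Φ (t : ℝ≥0∞) ≤ v⁻¹ := not_lt.mp h5
      calc Φ (t : ℝ≥0∞) * v ≤ v⁻¹ * v := by gcongr
        _ ≤ 1 := hinvmul v
  · -- sup ≤ sInf
    refine le_sInf (fun l hlA => ?_)
    obtain ⟨hl0, hl⟩ := hlA
    refine iSup₂_le (fun s hs => ?_)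
    set v : ℝ≥0∞ := volume {x : EuclideanSpace ℝ (Fin n)
      | (s : ℝ≥0∞) < ENNReal.ofReal |f x|} with hv
    set y : ℝ≥0∞ := yinv Φ v⁻¹ with hy
    rcases eq_or_ne l ∞ with rfl | hltop
    · exact le_top
    by_contra hcon
    push_neg at hcon
    have hs0 : (s : ℝ≥0∞) ≠ 0 := by exact_mod_cast hs.ne'
    have hstop : (s : ℝ≥0∞) ≠ ∞ := ENNReal.coe_ne_top
    have hcon' : l < (s : ℝ≥0∞) / y := by
      rwa [div_eq_mul_inv]
    have hly : l * y < (s : ℝ≥0∞) :=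
      (ENNReal.lt_div_iff_mul_lt (Or.inr hltop) (Or.inr hl0.ne')).mp hcon'
    have hdiv : y < (s : ℝ≥0∞) / l := by
      rw [ENNReal.lt_div_iff_mul_lt (Or.inl hl0.ne') (Or.inl hltop), mul_comm]
      exact hly
    have hdiv2 : sInf {t : ℝ≥0∞ | v⁻¹ < Φ t} < (s : ℝ≥0∞) / l := hdiv
    obtain ⟨τ, hτmem, hτlt⟩ := sInf_lt_iff.mp hdiv2
    have hmem : v⁻¹ < Φ τ := hτmem
    have hτ0 : τ ≠ 0 := by
      intro h
      rw [h, hΦ.map_zero] at hmem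
      exact absurd hmem (not_lt.mpr zero_le)
    have hτtop : τ ≠ ∞ := ne_top_of_lt hτlt
    have hlτ : l * τ ≤ (s : ℝ≥0∞) := by
      calc l * τ ≤ l * ((s : ℝ≥0∞) / l) := by gcongr
        _ = (s : ℝ≥0∞) := ENNReal.mul_div_cancel' (fun h => absurd h hl0.ne') (fun h => absurd h hltop)
    set tN : ℝ≥0 := τ.toNNReal with htN
    have htNc : (tN : ℝ≥0∞) = τ := ENNReal.coe_toNNReal hτtop
    have htNpos : 0 < tN := by
      rw [← ENNReal.coe_pos, htNc]
      exact pos_iff_ne_zero.mpr hτ0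
    have hmain := hl tN htNpos
    rw [htNc] at hmain
    have hvle : v ≤ volume {x : EuclideanSpace ℝ (Fin n)
        | l * τ < ENNReal.ofReal |f x|} := hanti _ _ hlτ
    have hΦv : Φ τ * v ≤ 1 := le_trans (by gcongr) hmain
    -- contradiction with v⁻¹ < Φ τ
    rcases eq_or_ne v 0 with hv0 | hv0
    · rw [hv0, ENNReal.inv_zero] at hmem
      exact absurd hmem not_top_lt
    rcases eq_or_ne v ∞ with hvtop | hvtop
    · rw [hvtop, ENNReal.inv_top] at hmem
      rw [hvtop, ENNReal.mul_top hmem.ne'] at hΦv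
      exact absurd hΦv (by simp)
    · have : (1 : ℝ≥0∞) < Φ τ * v := by
        calc (1 : ℝ≥0∞) = v⁻¹ * v := (ENNReal.inv_mul_cancel hv0 hvtop).symm
          _ < Φ τ * v := ENNReal.mul_lt_mul_left hv0 hvtop hmem
      exact absurd hΦv (not_le.mpr this)
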